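/- Per-iteration objective decrease bound: under the inexact Bregman proximal point condition, η_k := f(P^{k+1}) − f(P^k) satisfies η_k ≤ −β_k ( D_h(P^k, P^{k+1}) + D_h(P^{k+1}, P^k) ) + ν_k ≤ ν_k. -/
import Mathlib


open scoped RealInnerProductSpace

theorem per_iteration_decrease {E : Type*} [NormedAddCommGroup E] [InnerProductSpace ℝ E]
    (f h : E → ℝ) (hf : ConvexOn ℝ Set.univ f)
    (gh : E → E)
    (hconv : ∀ u v, h v + ⟪gh v, u - v⟫ ≤ h u)
    (D : E → E → ℝ) (hD : ∀ u v, D u v = h u - h v - ⟪gh v, u - v⟫)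
    (βk νk : ℝ) (hβ : 0 < βk) (hν : 0 ≤ νk)
    (Pk Pk1 : E) (d : E)
    (hd : ∀ y, f Pk1 + ⟪d, y - Pk1⟫ - νk ≤ f y)
    (hopt : d + βk • (gh Pk1 - gh Pk) = 0) :
    f Pk1 - f Pk ≤ -βk * (D Pk Pk1 + D Pk1 Pk) + νk ∧
    -βk * (D Pk Pk1 + D Pk1 Pk) + νk ≤ νk := by
  have hdval : d = -(βk • (gh Pk1 - gh Pk)) := by
    rw [eq_neg_iff_add_eq_zero]; exact hopt
  have hkey := hd Pk
  have hinner : ⟪d, Pk - Pk1⟫ = -βk * ⟪gh Pk1 - gh Pk, Pk - Pk1⟫ := by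
    rw [hdval]; simp [inner_smul_left, real_inner_smul_left]
  have hsum : D Pk Pk1 + D Pk1 Pk = -⟪gh Pk1 - gh Pk, Pk - Pk1⟫ := by
    rw [hD, hD]
    have h1 : ⟪gh Pk1 - gh Pk, Pk - Pk1⟫ = ⟪gh Pk1, Pk - Pk1⟫ - ⟪gh Pk, Pk - Pk1⟫ :=
      inner_sub_left _ _ _
    have h2 : ⟪gh Pk, Pk1 - Pk⟫ = -⟪gh Pk, Pk - Pk1⟫ := by
      rw [show Pk1 - Pk = -(Pk - Pk1) by abel, inner_neg_right]
    rw [h1, h2]; ring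
  have hD1 : 0 ≤ D Pk Pk1 := by rw [hD]; have := hconv Pk Pk1; linarith
  have hD2 : 0 ≤ D Pk1 Pk := by rw [hD]; have := hconv Pk1 Pk; linarith
  constructor
  · rw [hinner] at hkey
    nlinarith [hsum]
  · nlinarith
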